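/- Fix k ≥ 3. For all n ≥ k−1, the number of permutations of [n] avoiding 132, 213, and 23…k1 equals 1 plus the sum over i from 1 to k−2 of the number of permutations of [n−i] avoiding 132, 213, and 23…k1. -/

import Mathlib

/-- A permutation `π` of `Fin n` avoids the pattern given (in one-line notation) by the
list `s` when there is no increasing choice of positions along which the values of `π`
have the same pairwise comparisons as the entries of `s`. -/
def AvoidsPat {n : ℕ} (π : Equiv.Perm (Fin n)) (s : List ℕ) : Prop :=
  ¬ ∃ f : Fin s.length ↪o Fin n,
      ∀ i j : Fin s.length, s.get i < s.get j ↔ π (f i) < π (f j)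

/-- The number of permutations of `Fin n` avoiding every pattern in `R`. -/
noncomputable def AvoidCount (R : List (List ℕ)) (n : ℕ) : ℕ :=
  Nat.card {π : Equiv.Perm (Fin n) // ∀ s ∈ R, AvoidsPat π s}

/-- The `k`-generalized Fibonacci numbers: `F_{k,n} = 0` for `n ≤ 0`, `F_{k,1} = 1`,
`F_{k,n} = ∑_{i=1}^{k} F_{k,n-i}` for `n ≥ 2` (terms with nonpositive index are `0`). -/
def genFib (k : ℕ) : ℕ → ℕ
  | 0 => 0
  | 1 => 1
  | n + 2 => ∑ i ∈ Finset.range k, genFib k (n + 1 - i)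

open Equiv Finset
set_option maxRecDepth 10000
set_option maxHeartbeats 1000000

variable {n : ℕ}

def Pp (π : Perm (Fin n)) : Prop :=
  ∀ i j : Fin n, i < j → π i < π j → (π j : ℕ) + (i : ℕ) = (π i : ℕ) + (j : ℕ)

lemma not_avoids_132 (π : Perm (Fin n)) (a b c : Fin n) (hab : a < b) (hbc : b < c)
    (h1 : π a < π c) (h2 : π c < π b) : ¬ AvoidsPat π [1, 3, 2] := by
  intro h
  apply h
  refine ⟨OrderEmbedding.ofStrictMono (fun i => ![a, b, c] i) ?_, ?_⟩
  · intro x y hxy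
    fin_cases x <;> fin_cases y <;> simp_all <;> omega
  · intro i j
    have h3 : π a < π b := h1.trans h2
    simp only [Fin.lt_def] at h1 h2 h3
    fin_cases i <;> fin_cases j <;> simp <;> simp only [Fin.lt_def, Fin.le_def] <;> omega

lemma not_avoids_213 (π : Perm (Fin n)) (a b c : Fin n) (hab : a < b) (hbc : b < c)
    (h1 : π b < π a) (h2 : π a < π c) : ¬ AvoidsPat π [2, 1, 3] := by
  intro h
  apply h
  refine ⟨OrderEmbedding.ofStrictMono (fun i => ![a, b, c] i) ?_, ?_⟩
  · intro x y hxy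
    fin_cases x <;> fin_cases y <;> simp_all <;> omega
  · intro i j
    have h3 : π b < π c := h1.trans h2
    simp only [Fin.lt_def] at h1 h2 h3
    fin_cases i <;> fin_cases j <;> simp <;> simp only [Fin.lt_def, Fin.le_def] <;> omega

lemma pp_adj (π : Perm (Fin n)) (h1 : AvoidsPat π [1, 3, 2]) (h2 : AvoidsPat π [2, 1, 3])
    (i j : Fin n) (hij : (j : ℕ) = (i : ℕ) + 1) (hlt : π i < π j) :
    (π j : ℕ) = (π i : ℕ) + 1 := by
  by_contra hne
  have hvlt : (π i : ℕ) < (π j : ℕ) := hlt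
  have hw : (π i : ℕ) + 1 < n := lt_of_le_of_lt (by omega) (π j).isLt
  have hπl : π (π.symm ⟨(π i : ℕ) + 1, hw⟩) = ⟨(π i : ℕ) + 1, hw⟩ := π.apply_symm_apply _
  set l := π.symm ⟨(π i : ℕ) + 1, hw⟩ with hl
  have hlv : (π l : ℕ) = (π i : ℕ) + 1 := by rw [hπl]
  have hli : (l : ℕ) ≠ (i : ℕ) := by
    intro h
    have h' : l = i := Fin.ext h
    rw [h'] at hlv; omega
  have hlj : (l : ℕ) ≠ (j : ℕ) := by
    intro h
    have h' : l = j := Fin.ext h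
    rw [h'] at hlv; omega
  rcases lt_or_gt_of_ne hli with hc | hc
  · exact not_avoids_213 π l i j (Fin.lt_def.mpr hc) (Fin.lt_def.mpr (by omega))
      (Fin.lt_def.mpr (by omega)) (Fin.lt_def.mpr (by omega)) h2
  · have hjl : (j : ℕ) < (l : ℕ) := by omega
    exact not_avoids_132 π i j l (Fin.lt_def.mpr (by omega)) (Fin.lt_def.mpr hjl)
      (Fin.lt_def.mpr (by omega)) (Fin.lt_def.mpr (by omega)) h1

lemma pp_of_avoids (π : Perm (Fin n)) (h1 : AvoidsPat π [1, 3, 2])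
    (h2 : AvoidsPat π [2, 1, 3]) : Pp π := by
  have key : ∀ d : ℕ, ∀ i j : Fin n, (j : ℕ) = (i : ℕ) + d → π i < π j →
      (π j : ℕ) = (π i : ℕ) + d := by
    intro d
    induction d with
    | zero =>
      intro i j hij hlt
      have h' : i = j := Fin.ext (by omega)
      subst h'
      exact absurd hlt (lt_irrefl _)
    | succ d ih =>
      intro i j hij hlt
      rcases Nat.eq_zero_or_pos d with hd | hd
      · subst hd; exact pp_adj π h1 h2 i j (by omega) hlt
      · have hvlt : (π i : ℕ) < (π j : ℕ) := hlt
        have hm : (i : ℕ) + d < n := by have := j.isLt; omega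
        set m : Fin n := ⟨(i : ℕ) + d, hm⟩ with hmdef
        have hmval : (m : ℕ) = (i : ℕ) + d := rfl
        have him : i < m := Fin.lt_def.mpr (by omega)
        have hmj : m < j := Fin.lt_def.mpr (by omega)
        have hmi_ne : (π m : ℕ) ≠ (π i : ℕ) := by
          intro h
          have h' := π.injective (Fin.ext h : π m = π i)
          have h'' := congrArg Fin.val h'
          simp only [hmval] at h''
          omega
        rcases lt_or_gt_of_ne hmi_ne with hc | hc
        · have hmltj : π m < π j := Fin.lt_def.mpr (by omega)
          have := pp_adj π h1 h2 m j (by omega) hmltj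
          omega
        · have hilm : π i < π m := Fin.lt_def.mpr hc
          have hmm : (π m : ℕ) = (π i : ℕ) + d := ih i m rfl hilm
          rcases lt_trichotomy (π m) (π j) with hcc | hcc | hcc
          · have := pp_adj π h1 h2 m j (by omega) hcc
            omega
          · have h' := π.injective hcc
            have := congrArg Fin.val h'
            omega
          · exact absurd h1 (fun hh => not_avoids_132 π i m j him hmj hlt hcc hh)
  intro i j hij hlt
  have hv : (i : ℕ) < j := hij
  have := key ((j : ℕ) - (i : ℕ)) i j (by omega) hlt
  omega

lemma pp_val_lo (π : Perm (Fin n)) (hP : Pp π) (h0 : 0 < n) (x : Fin n)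
    (hx : (x : ℕ) + (π ⟨0, h0⟩ : ℕ) < n) :
    (π x : ℕ) = (π ⟨0, h0⟩ : ℕ) + (x : ℕ) := by
  rcases Nat.eq_zero_or_pos (x : ℕ) with h | h
  · have h' : x = ⟨0, h0⟩ := Fin.ext h
    rw [h']
    omega
  · set v := (π ⟨0, h0⟩ : ℕ) with hv
    have hvx : v + (x : ℕ) < n := by omega
    have hπy : π (π.symm ⟨v + (x : ℕ), hvx⟩) = ⟨v + (x : ℕ), hvx⟩ := π.apply_symm_apply _
    set y := π.symm ⟨v + (x : ℕ), hvx⟩ with hy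
    have hyv : (π y : ℕ) = v + (x : ℕ) := by rw [hπy]
    have hy0 : (y : ℕ) ≠ 0 := by
      intro h'
      have h'' : y = ⟨0, h0⟩ := Fin.ext h'
      rw [h''] at hyv
      omega
    have h0y : (⟨0, h0⟩ : Fin n) < y := Fin.lt_def.mpr (by simp; omega)
    have hπlt : π ⟨0, h0⟩ < π y := Fin.lt_def.mpr (by simp only [← hv]; omega)
    have heq := hP ⟨0, h0⟩ y h0y hπlt
    have hxy : y = x := Fin.ext (by simp at heq; omega)
    rw [← hxy]
    omega

lemma pp_val_hi (π : Perm (Fin n)) (hP : Pp π) (h0 : 0 < n) (x : Fin n)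
    (hx : n ≤ (x : ℕ) + (π ⟨0, h0⟩ : ℕ)) :
    (π x : ℕ) < (π ⟨0, h0⟩ : ℕ) := by
  by_contra hle
  push_neg at hle
  set v := (π ⟨0, h0⟩ : ℕ) with hv
  have hx0 : (x : ℕ) ≠ 0 := by
    intro h'
    have h'' : x = ⟨0, h0⟩ := Fin.ext h'
    rw [h''] at hx
    have := (π ⟨0, h0⟩).isLt
    omega
  rcases eq_or_lt_of_le hle with h' | h'
  · have : π x = π ⟨0, h0⟩ := Fin.ext h'.symm
    have := π.injective this
    have := congrArg Fin.val this
    simp at this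
    omega
  · have h0x : (⟨0, h0⟩ : Fin n) < x := Fin.lt_def.mpr (by simp; omega)
    have hπlt : π ⟨0, h0⟩ < π x := Fin.lt_def.mpr h'
    have heq := hP ⟨0, h0⟩ x h0x hπlt
    have hil := (π x).isLt
    simp only [Fin.val_mk, ← hv] at heq
    omega

def Bad (k : ℕ) (π : Perm (Fin n)) : Prop :=
  ∃ a b c : Fin n, (b : ℕ) = (a : ℕ) + (k - 2) ∧ b < c ∧ π a < π b ∧ π c < π a

def Qq (k : ℕ) (π : Perm (Fin n)) : Prop := Pp π ∧ ¬ Bad k π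

lemma pp_run (π : Perm (Fin n)) (hP : Pp π) (a b l : Fin n) (hab : a < b)
    (hπ : π a < π b) (hal : a ≤ l) (hlb : l ≤ b) :
    (π l : ℕ) + (a : ℕ) = (π a : ℕ) + (l : ℕ) := by
  rcases eq_or_lt_of_le hal with h | h
  · rw [← h]
  rcases eq_or_lt_of_le hlb with h2 | h2
  · rw [h2]; exact hP a b hab hπ
  have hne : (π l : ℕ) ≠ (π a : ℕ) := by
    intro hh
    have := π.injective (Fin.ext hh : π l = π a)
    have := congrArg Fin.val this
    have hv := Fin.lt_def.mp h
    omega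
  rcases lt_or_gt_of_ne hne with hc | hc
  · have e1 := hP l b h2 (Fin.lt_def.mpr (by have := Fin.lt_def.mp hπ; omega))
    have e2 := hP a b hab hπ
    have hv := Fin.lt_def.mp h
    have hv2 := Fin.lt_def.mp h2
    omega
  · exact hP a l h (Fin.lt_def.mpr hc)

lemma s3_get (k : ℕ) (m : ℕ) (hm : m < ((List.range (k - 1)).map (· + 2) ++ [1]).length) :
    ((List.range (k - 1)).map (· + 2) ++ [1]).get ⟨m, hm⟩ = if m < k - 1 then m + 2 else 1 := by
  simp only [List.get_eq_getElem]
  by_cases h : m < k - 1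
  · rw [List.getElem_append_left (by simpa using h)]
    simp [h]
  · have hm' : m = k - 1 := by simp at hm; omega
    subst hm'
    rw [List.getElem_append_right (by simp)]
    simp [h]

lemma not_avoids_s3 (k : ℕ) (hk : 3 ≤ k) (π : Perm (Fin n)) (hP : Pp π)
    (a b c : Fin n) (hb : (b : ℕ) = (a : ℕ) + (k - 2)) (hbc : b < c)
    (h1 : π a < π b) (h2 : π c < π a) :
    ¬ AvoidsPat π ((List.range (k - 1)).map (· + 2) ++ [1]) := by
  intro h
  apply h
  have hlen : ((List.range (k - 1)).map (· + 2) ++ [1]).length = k - 1 + 1 := by simp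
  have hbn := b.isLt
  have hcn := c.isLt
  have hbcv := Fin.lt_def.mp hbc
  have hab : a < b := Fin.lt_def.mpr (by omega)
  have hpos : ∀ m : ℕ, m < k - 1 → (a : ℕ) + m < n := by intro m hm; omega
  have hval : ∀ m : ℕ, (hm : m < k - 1) →
      (π ⟨(a : ℕ) + m, hpos m hm⟩ : ℕ) = (π a : ℕ) + m := by
    intro m hm
    have := pp_run π hP a b ⟨(a : ℕ) + m, hpos m hm⟩ hab h1
      (Fin.le_def.mpr (by simp)) (Fin.le_def.mpr (by simp; omega))
    simp at this
    omega
  have h1v := Fin.lt_def.mp h1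
  have h2v := Fin.lt_def.mp h2
  refine ⟨OrderEmbedding.ofStrictMono
    (fun i => if h' : (i : ℕ) < k - 1 then (⟨(a : ℕ) + i, hpos _ h'⟩ : Fin n) else c) ?_, ?_⟩
  · unfold StrictMono
    intro x y hxy
    have hxv : (x : ℕ) < k - 1 + 1 := by simpa using x.isLt
    have hyv : (y : ℕ) < k - 1 + 1 := by simpa using y.isLt
    have hxyv := Fin.lt_def.mp hxy
    by_cases hx : (x : ℕ) < k - 1 <;> by_cases hy : (y : ℕ) < k - 1
    · simp only [dif_pos hx, dif_pos hy]
      exact Fin.lt_def.mpr (by simp; omega)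
    · simp only [dif_pos hx, dif_neg hy]
      exact Fin.lt_def.mpr (by simp; omega)
    · omega
    · omega
  · intro i j
    have hiv : (i : ℕ) < k - 1 + 1 := by simpa using i.isLt
    have hjv : (j : ℕ) < k - 1 + 1 := by simpa using j.isLt
    have hgi := s3_get k i i.isLt
    have hgj := s3_get k j j.isLt
    simp only [Fin.eta] at hgi hgj
    rw [hgi, hgj]
    simp only [OrderEmbedding.coe_ofStrictMono]
    by_cases hi : (i : ℕ) < k - 1 <;> by_cases hj : (j : ℕ) < k - 1
    · simp only [dif_pos hi, dif_pos hj, if_pos hi, if_pos hj]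
      rw [Fin.lt_def]
      rw [hval i hi, hval j hj]
      omega
    · simp only [dif_pos hi, dif_neg hj, if_pos hi, if_neg hj]
      rw [Fin.lt_def]
      rw [hval i hi]
      constructor
      · omega
      · intro hh; omega
    · simp only [dif_neg hi, dif_pos hj, if_neg hi, if_pos hj]
      rw [Fin.lt_def]
      rw [hval j hj]
      constructor
      · intro _; omega
      · intro _; omega
    · simp only [dif_neg hi, dif_neg hj, if_neg hi, if_neg hj]
      have : i = j := Fin.ext (by omega)
      subst this
      simp

lemma strictMono_gap {m : ℕ} (f : Fin m → Fin n) (hf : StrictMono f) :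
    ∀ d : ℕ, ∀ i j : Fin m, (j : ℕ) = (i : ℕ) + d → (f i : ℕ) + d ≤ (f j : ℕ) := by
  intro d
  induction d with
  | zero =>
    intro i j hij
    have : i = j := Fin.ext (by omega)
    subst this; omega
  | succ d ih =>
    intro i j hij
    have hm : (i : ℕ) + d < m := by have := j.isLt; omega
    have h1 := ih i ⟨(i : ℕ) + d, hm⟩ rfl
    have h2 : f ⟨(i : ℕ) + d, hm⟩ < f j := hf (Fin.lt_def.mpr (by simp; omega))
    have := Fin.lt_def.mp h2
    omega

lemma bad_of_embedding (k : ℕ) (hk : 3 ≤ k) (π : Perm (Fin n)) (hP : Pp π)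
    (f : Fin ((List.range (k - 1)).map (· + 2) ++ [1]).length ↪o Fin n)
    (hf : ∀ i j, ((List.range (k - 1)).map (· + 2) ++ [1]).get i
        < ((List.range (k - 1)).map (· + 2) ++ [1]).get j ↔ π (f i) < π (f j)) :
    Bad k π := by
  have hlen : ((List.range (k - 1)).map (· + 2) ++ [1]).length = k - 1 + 1 := by simp
  have hi0 : (0 : ℕ) < ((List.range (k - 1)).map (· + 2) ++ [1]).length := by simp
  have hib : (k - 2 : ℕ) < ((List.range (k - 1)).map (· + 2) ++ [1]).length := by simp; omega
  have hic : (k - 1 : ℕ) < ((List.range (k - 1)).map (· + 2) ++ [1]).length := by simp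
  set i0 : Fin _ := (⟨0, hi0⟩ : Fin _)
  set ib : Fin _ := (⟨k - 2, hib⟩ : Fin _)
  set ic : Fin _ := (⟨k - 1, hic⟩ : Fin _)
  have g0 := s3_get k 0 hi0
  have gb := s3_get k (k - 2) hib
  have gc := s3_get k (k - 1) hic
  rw [if_pos (by omega)] at g0
  rw [if_pos (by omega)] at gb
  rw [if_neg (by omega)] at gc
  -- π (f i0) < π (f ib)
  have hπ1 : π (f i0) < π (f ib) := (hf i0 ib).mp (by rw [g0, gb]; omega)
  have hπ2 : π (f ic) < π (f i0) := (hf ic i0).mp (by rw [gc, g0]; omega)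
  have hgap := strictMono_gap f f.strictMono (k - 2) i0 ib (by simp [i0, ib])
  have hmono2 : f ib < f ic := f.strictMono (Fin.lt_def.mpr (by simp [ib, ic]; omega))
  have hbn : (f i0 : ℕ) + (k - 2) < n := by
    have := (f ib).isLt
    omega
  set a := f i0
  set c := f ic
  set b : Fin n := ⟨(a : ℕ) + (k - 2), hbn⟩
  have hab : a < b := Fin.lt_def.mpr (by simp [b]; omega)
  have haib : a < f ib := Fin.lt_def.mpr (by omega)
  have hπab : π a < π b := by
    have := pp_run π hP a (f ib) b haib hπ1 (Fin.le_def.mpr (by simp [b])) (Fin.le_def.mpr (by simp [b]; omega))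
    have hπ1v := Fin.lt_def.mp hπ1
    exact Fin.lt_def.mpr (by simp at this ⊢; omega)
  refine ⟨a, b, c, by simp [b], ?_, hπab, hπ2⟩
  · exact Fin.lt_def.mpr (by have := Fin.lt_def.mp hmono2; simp [b]; omega)

lemma avoids_iff (k : ℕ) (hk : 3 ≤ k) (π : Perm (Fin n)) :
    (∀ s ∈ [[1, 3, 2], [2, 1, 3], ((List.range (k - 1)).map (· + 2)) ++ [1]],
      AvoidsPat π s) ↔ Qq k π := by
  constructor
  · intro h
    have h1 := h [1, 3, 2] (by simp)
    have h2 := h [2, 1, 3] (by simp)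
    have h3 := h _ (by simp : ((List.range (k - 1)).map (· + 2)) ++ [1] ∈ _)
    have hP := pp_of_avoids π h1 h2
    refine ⟨hP, ?_⟩
    rintro ⟨a, b, c, hb, hbc, hπ1, hπ2⟩
    exact not_avoids_s3 k hk π hP a b c hb hbc hπ1 hπ2 h3
  · rintro ⟨hP, hB⟩ s hs
    simp only [List.mem_cons, List.not_mem_nil, or_false] at hs
    rcases hs with hs | hs | hs
    · subst hs
      rintro ⟨f, hf⟩
      have hab : f ⟨0, by norm_num⟩ < f ⟨1, by norm_num⟩ := f.strictMono (Fin.mk_lt_mk.mpr (by norm_num))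
      have hbc : f ⟨1, by norm_num⟩ < f ⟨2, by norm_num⟩ := f.strictMono (Fin.mk_lt_mk.mpr (by norm_num))
      have e1 : π (f ⟨0, by norm_num⟩) < π (f ⟨1, by norm_num⟩) :=
        (hf ⟨0, by norm_num⟩ ⟨1, by norm_num⟩).mp (by norm_num)
      have e2 : π (f ⟨0, by norm_num⟩) < π (f ⟨2, by norm_num⟩) :=
        (hf ⟨0, by norm_num⟩ ⟨2, by norm_num⟩).mp (by norm_num)
      have e3 : π (f ⟨2, by norm_num⟩) < π (f ⟨1, by norm_num⟩) :=
        (hf ⟨2, by norm_num⟩ ⟨1, by norm_num⟩).mp (by norm_num)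
      have q1 := hP _ _ hab e1
      have q2 := hP _ _ (hab.trans hbc) e2
      have hv1 := Fin.lt_def.mp hbc
      have hv2 := Fin.lt_def.mp e3
      omega
    · subst hs
      rintro ⟨f, hf⟩
      have hab : f ⟨0, by norm_num⟩ < f ⟨1, by norm_num⟩ := f.strictMono (Fin.mk_lt_mk.mpr (by norm_num))
      have hbc : f ⟨1, by norm_num⟩ < f ⟨2, by norm_num⟩ := f.strictMono (Fin.mk_lt_mk.mpr (by norm_num))
      have e1 : π (f ⟨1, by norm_num⟩) < π (f ⟨0, by norm_num⟩) :=
        (hf ⟨1, by norm_num⟩ ⟨0, by norm_num⟩).mp (by norm_num)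
      have e2 : π (f ⟨0, by norm_num⟩) < π (f ⟨2, by norm_num⟩) :=
        (hf ⟨0, by norm_num⟩ ⟨2, by norm_num⟩).mp (by norm_num)
      have e3 : π (f ⟨1, by norm_num⟩) < π (f ⟨2, by norm_num⟩) :=
        (hf ⟨1, by norm_num⟩ ⟨2, by norm_num⟩).mp (by norm_num)
      have q1 := hP _ _ hbc e3
      have q2 := hP _ _ (hab.trans hbc) e2
      have hv1 := Fin.lt_def.mp hab
      have hv2 := Fin.lt_def.mp e1
      omega
    · subst hs
      rintro ⟨f, hf⟩
      exact hB (bad_of_embedding k hk π hP f hf)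

noncomputable def cutPerm (π : Perm (Fin n)) (i : ℕ)
    (hb : ∀ x : Fin n, i ≤ (x : ℕ) → (π x : ℕ) < n - i) : Perm (Fin (n - i)) :=
  Equiv.ofBijective
    (fun x => ⟨(π ⟨(x : ℕ) + i, by have := x.isLt; omega⟩ : ℕ), hb _ (by simp)⟩)
    (Finite.injective_iff_bijective.mp (by
      intro x y hxy
      simp only [Fin.mk.injEq] at hxy
      have := π.injective (Fin.ext hxy)
      simp only [Fin.mk.injEq] at this
      exact Fin.ext (by omega)))

lemma cutPerm_apply (π : Perm (Fin n)) (i : ℕ)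
    (hb : ∀ x : Fin n, i ≤ (x : ℕ) → (π x : ℕ) < n - i) (x : Fin (n - i)) :
    (cutPerm π i hb x : ℕ) = (π ⟨(x : ℕ) + i, by have := x.isLt; omega⟩ : ℕ) := rfl

noncomputable def gluePerm (i : ℕ) (hin : i ≤ n) (τ : Perm (Fin (n - i))) : Perm (Fin n) :=
  Equiv.ofBijective
    (fun x => if h : (x : ℕ) < i then ⟨n - i + (x : ℕ), by omega⟩
      else ⟨(τ ⟨(x : ℕ) - i, by have := x.isLt; omega⟩ : ℕ), by
        have := (τ ⟨(x : ℕ) - i, by have := x.isLt; omega⟩).isLt; omega⟩)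
    (Finite.injective_iff_bijective.mp (by
      intro x y hxy
      simp only [] at hxy
      by_cases hx : (x : ℕ) < i <;> by_cases hy : (y : ℕ) < i
      · rw [dif_pos hx, dif_pos hy] at hxy
        simp only [Fin.mk.injEq] at hxy
        exact Fin.ext (by omega)
      · rw [dif_pos hx, dif_neg hy] at hxy
        simp only [Fin.mk.injEq] at hxy
        have := (τ ⟨(y : ℕ) - i, by have := y.isLt; omega⟩).isLt
        omega
      · rw [dif_neg hx, dif_pos hy] at hxy
        simp only [Fin.mk.injEq] at hxy
        have := (τ ⟨(x : ℕ) - i, by have := x.isLt; omega⟩).isLt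
        omega
      · rw [dif_neg hx, dif_neg hy] at hxy
        simp only [Fin.mk.injEq] at hxy
        have := τ.injective (Fin.ext hxy)
        simp only [Fin.mk.injEq] at this
        exact Fin.ext (by omega)))

lemma gluePerm_apply_lt (i : ℕ) (hin : i ≤ n) (τ : Perm (Fin (n - i))) (x : Fin n)
    (hx : (x : ℕ) < i) : (gluePerm i hin τ x : ℕ) = n - i + (x : ℕ) := by
  simp [gluePerm, Equiv.ofBijective, dif_pos hx]

lemma gluePerm_apply_ge (i : ℕ) (hin : i ≤ n) (τ : Perm (Fin (n - i))) (x : Fin n)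
    (hx : i ≤ (x : ℕ)) :
    (gluePerm i hin τ x : ℕ)
      = (τ ⟨(x : ℕ) - i, by have := x.isLt; omega⟩ : ℕ) := by
  simp [gluePerm, Equiv.ofBijective, dif_neg (by omega : ¬ (x : ℕ) < i)]

lemma qq_cut (k i : ℕ) (π : Perm (Fin n)) (hQ : Qq k π)
    (hb : ∀ x : Fin n, i ≤ (x : ℕ) → (π x : ℕ) < n - i) : Qq k (cutPerm π i hb) := by
  obtain ⟨hP, hB⟩ := hQ
  constructor
  · intro x y hxy hlt
    have hxv := x.isLt
    have hyv := y.isLt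
    have hlt' : π ⟨(x : ℕ) + i, by omega⟩ < π ⟨(y : ℕ) + i, by omega⟩ := by
      rw [Fin.lt_def]
      have := Fin.lt_def.mp hlt
      rw [cutPerm_apply, cutPerm_apply] at this
      exact this
    have := hP ⟨(x : ℕ) + i, by omega⟩ ⟨(y : ℕ) + i, by omega⟩
      (Fin.lt_def.mpr (by simp; have := Fin.lt_def.mp hxy; omega)) hlt'
    rw [cutPerm_apply, cutPerm_apply]
    simp at this ⊢
    have := Fin.lt_def.mp hxy
    omega
  · rintro ⟨a, b, c, hab, hbc, h1, h2⟩
    apply hB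
    have hav := a.isLt
    have hbv := b.isLt
    have hcv := c.isLt
    refine ⟨⟨(a : ℕ) + i, by omega⟩, ⟨(b : ℕ) + i, by omega⟩, ⟨(c : ℕ) + i, by omega⟩,
      by simp; omega, Fin.lt_def.mpr (by simp; have := Fin.lt_def.mp hbc; omega), ?_, ?_⟩
    · rw [Fin.lt_def]
      have := Fin.lt_def.mp h1
      rw [cutPerm_apply, cutPerm_apply] at this
      exact this
    · rw [Fin.lt_def]
      have := Fin.lt_def.mp h2
      rw [cutPerm_apply, cutPerm_apply] at this
      exact this

lemma qq_glue (k i : ℕ) (hk : 3 ≤ k) (hik : i ≤ k - 2) (hin : i ≤ n)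
    (τ : Perm (Fin (n - i))) (hQ : Qq k τ) : Qq k (gluePerm i hin τ) := by
  obtain ⟨hP, hB⟩ := hQ
  constructor
  · intro x y hxy hlt
    have hxv := x.isLt
    have hyv := y.isLt
    have hxyv := Fin.lt_def.mp hxy
    have hltv := Fin.lt_def.mp hlt
    by_cases hx : (x : ℕ) < i <;> by_cases hy : (y : ℕ) < i
    · rw [gluePerm_apply_lt i hin τ x hx, gluePerm_apply_lt i hin τ y hy] at *
      omega
    · exfalso
      rw [gluePerm_apply_lt i hin τ x hx, gluePerm_apply_ge i hin τ y (by omega)] at hltv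
      have := (τ ⟨(y : ℕ) - i, by omega⟩).isLt
      omega
    · omega
    · rw [gluePerm_apply_ge i hin τ x (by omega), gluePerm_apply_ge i hin τ y (by omega)] at *
      have := hP ⟨(x : ℕ) - i, by omega⟩ ⟨(y : ℕ) - i, by omega⟩
        (Fin.lt_def.mpr (by simp; omega)) (Fin.lt_def.mpr (by simp; omega))
      simp at this
      omega
  · rintro ⟨a, b, c, hab, hbc, h1, h2⟩
    have hav := a.isLt
    have hbv := b.isLt
    have hcv := c.isLt
    have hbcv := Fin.lt_def.mp hbc
    have h1v := Fin.lt_def.mp h1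
    have h2v := Fin.lt_def.mp h2
    by_cases ha : (a : ℕ) < i
    · by_cases hbi : (b : ℕ) < i
      · omega
      · exfalso
        rw [gluePerm_apply_lt i hin τ a ha, gluePerm_apply_ge i hin τ b (by omega)] at h1v
        have := (τ ⟨(b : ℕ) - i, by omega⟩).isLt
        omega
    · have hbi : ¬ (b : ℕ) < i := by omega
      have hci : ¬ (c : ℕ) < i := by omega
      rw [gluePerm_apply_ge i hin τ a (by omega)] at h1v h2v
      rw [gluePerm_apply_ge i hin τ b (by omega)] at h1v
      rw [gluePerm_apply_ge i hin τ c (by omega)] at h2v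
      apply hB
      exact ⟨⟨(a : ℕ) - i, by omega⟩, ⟨(b : ℕ) - i, by omega⟩, ⟨(c : ℕ) - i, by omega⟩,
        by simp; omega, Fin.lt_def.mpr (by simp; omega),
        Fin.lt_def.mpr (by simp; omega), Fin.lt_def.mpr (by simp; omega)⟩

lemma qq_one (k m : ℕ) : Qq k (1 : Perm (Fin m)) := by
  constructor
  · intro x y hxy hlt
    simp
    omega
  · rintro ⟨a, b, c, hab, hbc, h1, h2⟩
    simp only [Equiv.Perm.coe_one, id_eq] at h1 h2
    have := Fin.lt_def.mp hbc
    have := Fin.lt_def.mp h1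
    have := Fin.lt_def.mp h2
    omega

lemma eq_one_of_pp (π : Perm (Fin n)) (hP : Pp π) (h0 : 0 < n)
    (hv : (π ⟨0, h0⟩ : ℕ) = 0) : π = 1 := by
  apply Equiv.ext
  intro x
  apply Fin.ext
  have := pp_val_lo π hP h0 x (by have := x.isLt; omega)
  simp
  omega

lemma glue_cut (π : Perm (Fin n)) (i : ℕ) (hin : i ≤ n)
    (hb : ∀ x : Fin n, i ≤ (x : ℕ) → (π x : ℕ) < n - i)
    (hlo : ∀ x : Fin n, (x : ℕ) < i → (π x : ℕ) = n - i + (x : ℕ)) :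
    gluePerm i hin (cutPerm π i hb) = π := by
  apply Equiv.ext
  intro x
  apply Fin.ext
  by_cases hx : (x : ℕ) < i
  · rw [gluePerm_apply_lt i hin _ x hx, hlo x hx]
  · rw [gluePerm_apply_ge i hin _ x (by omega), cutPerm_apply]
    congr 1
    apply congrArg
    apply Fin.ext
    simp
    omega

lemma cut_glue (i : ℕ) (hin : i ≤ n) (τ : Perm (Fin (n - i)))
    (hb : ∀ x : Fin n, i ≤ (x : ℕ) → ((gluePerm i hin τ) x : ℕ) < n - i) :
    cutPerm (gluePerm i hin τ) i hb = τ := by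
  apply Equiv.ext
  intro x
  apply Fin.ext
  rw [cutPerm_apply, gluePerm_apply_ge i hin τ _ (by simp)]
  congr 1
  apply congrArg
  apply Fin.ext
  simp

open Classical in
lemma count_eq (k m : ℕ) (hk : 3 ≤ k) :
    AvoidCount [[1, 3, 2], [2, 1, 3], ((List.range (k - 1)).map (· + 2)) ++ [1]] m
      = (Finset.univ.filter (fun π : Perm (Fin m) => Qq k π)).card := by
  rw [AvoidCount]
  rw [Nat.card_congr (Equiv.subtypeEquivRight (fun π => avoids_iff k hk π))]
  rw [Nat.card_eq_fintype_card, Fintype.card_subtype]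

open Classical in
theorem avoid_132_213_23k1_recurrence' (k n : ℕ) (hk : 3 ≤ k) (hn : k - 1 ≤ n) :
    AvoidCount [[1, 3, 2], [2, 1, 3], ((List.range (k - 1)).map (· + 2)) ++ [1]] n
      = 1 + ∑ i ∈ Finset.Icc 1 (k - 2),
          AvoidCount [[1, 3, 2], [2, 1, 3], ((List.range (k - 1)).map (· + 2)) ++ [1]]
            (n - i) := by
  have h0 : 0 < n := by omega
  rw [count_eq k n hk]
  set S := Finset.univ.filter (fun π : Perm (Fin n) => Qq k π) with hS
  have hsplit := Finset.card_filter_add_card_filter_not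
      (s := S) (p := fun π : Perm (Fin n) => (π ⟨0, h0⟩ : ℕ) = 0)
  have hid : S.filter (fun π : Perm (Fin n) => (π ⟨0, h0⟩ : ℕ) = 0) = {1} := by
    ext π
    simp only [hS, Finset.mem_filter, Finset.mem_singleton, Finset.mem_univ, true_and]
    constructor
    · rintro ⟨hQ, hv⟩
      exact eq_one_of_pp π hQ.1 h0 hv
    · rintro rfl
      exact ⟨qq_one k n, by simp⟩
  have hmaps : ∀ π ∈ S.filter (fun π : Perm (Fin n) => ¬ (π ⟨0, h0⟩ : ℕ) = 0),
      n - (π ⟨0, h0⟩ : ℕ) ∈ Finset.Icc 1 (k - 2) := by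
    intro π hπ
    simp only [hS, Finset.mem_filter, Finset.mem_univ, true_and] at hπ
    obtain ⟨⟨hP, hB⟩, hv⟩ := hπ
    have hvn := (π ⟨0, h0⟩).isLt
    rw [Finset.mem_Icc]
    refine ⟨by omega, ?_⟩
    by_contra hgt
    push_neg at hgt
    apply hB
    have hkb : k - 2 < n := by omega
    have hcn : n - (π ⟨0, h0⟩ : ℕ) < n := by omega
    refine ⟨⟨0, h0⟩, ⟨k - 2, hkb⟩, ⟨n - (π ⟨0, h0⟩ : ℕ), hcn⟩, by simp,
      Fin.lt_def.mpr (by simp; omega), ?_, ?_⟩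
    · have := pp_val_lo π hP h0 ⟨k - 2, hkb⟩ (by simp; omega)
      exact Fin.lt_def.mpr (by simp at this ⊢; omega)
    · have := pp_val_hi π hP h0 ⟨n - (π ⟨0, h0⟩ : ℕ), hcn⟩ (by simp)
      exact Fin.lt_def.mpr (by simp at this ⊢; omega)
  rw [← hsplit, hid]
  rw [Finset.card_eq_sum_card_fiberwise hmaps]
  simp only [Finset.card_singleton]
  congr 1
  apply Finset.sum_congr rfl
  intro i hi
  rw [Finset.mem_Icc] at hi
  rw [count_eq k (n - i) hk]
  have hin : i ≤ n := by omega
  have hval0 : ∀ π : Perm (Fin n),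
      π ∈ (S.filter (fun π : Perm (Fin n) => ¬ (π ⟨0, h0⟩ : ℕ) = 0)).filter
        (fun π => n - (π ⟨0, h0⟩ : ℕ) = i) → (π ⟨0, h0⟩ : ℕ) = n - i := by
    intro π hπ
    simp only [hS, Finset.mem_filter, Finset.mem_univ, true_and] at hπ
    have := (π ⟨0, h0⟩).isLt
    omega
  have hQmem : ∀ π : Perm (Fin n),
      π ∈ (S.filter (fun π : Perm (Fin n) => ¬ (π ⟨0, h0⟩ : ℕ) = 0)).filter
        (fun π => n - (π ⟨0, h0⟩ : ℕ) = i) → Qq k π := by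
    intro π hπ
    simp only [hS, Finset.mem_filter, Finset.mem_univ, true_and] at hπ
    exact hπ.1.1
  have hbfun : ∀ π : Perm (Fin n),
      π ∈ (S.filter (fun π : Perm (Fin n) => ¬ (π ⟨0, h0⟩ : ℕ) = 0)).filter
        (fun π => n - (π ⟨0, h0⟩ : ℕ) = i) →
      ∀ x : Fin n, i ≤ (x : ℕ) → (π x : ℕ) < n - i := by
    intro π hπ x hx
    have hv := hval0 π hπ
    have := pp_val_hi π (hQmem π hπ).1 h0 x (by omega)
    omega
  have hlofun : ∀ π : Perm (Fin n),
      π ∈ (S.filter (fun π : Perm (Fin n) => ¬ (π ⟨0, h0⟩ : ℕ) = 0)).filter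
        (fun π => n - (π ⟨0, h0⟩ : ℕ) = i) →
      ∀ x : Fin n, (x : ℕ) < i → (π x : ℕ) = n - i + (x : ℕ) := by
    intro π hπ x hx
    have hv := hval0 π hπ
    have := pp_val_lo π (hQmem π hπ).1 h0 x (by omega)
    omega
  refine Finset.card_bij' (fun π hπ => cutPerm π i (hbfun π hπ))
    (fun τ _ => gluePerm i hin τ) ?_ ?_ ?_ ?_
  · intro π hπ
    simp only [Finset.mem_filter, Finset.mem_univ, true_and]
    exact qq_cut k i π (hQmem π hπ) _
  · intro τ hτ
    simp only [Finset.mem_filter, Finset.mem_univ, true_and] at hτ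
    have hQg := qq_glue k i hk (by omega) hin τ hτ
    have hg0 : ((gluePerm i hin τ) ⟨0, h0⟩ : ℕ) = n - i + 0 :=
      gluePerm_apply_lt i hin τ ⟨0, h0⟩ (by simp; omega)
    simp only [hS, Finset.mem_filter, Finset.mem_univ, true_and]
    refine ⟨⟨hQg, ?_⟩, ?_⟩
    · simp only [hg0]; omega
    · simp only [hg0]; omega
  · intro π hπ
    exact glue_cut π i hin (hbfun π hπ) (hlofun π hπ)
  · intro τ hτ
    exact cut_glue i hin τ _


theorem avoid_132_213_23k1_recurrence (k n : ℕ) (hk : 3 ≤ k) (hn : k - 1 ≤ n) :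
    AvoidCount [[1, 3, 2], [2, 1, 3], ((List.range (k - 1)).map (· + 2)) ++ [1]] n
      = 1 + ∑ i ∈ Finset.Icc 1 (k - 2),
          AvoidCount [[1, 3, 2], [2, 1, 3], ((List.range (k - 1)).map (· + 2)) ++ [1]]
            (n - i) := by
  exact avoid_132_213_23k1_recurrence' k n hk hn
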